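/- Let φ ≥ 1, τ > 0 be real numbers, and let x > 0 and m be real numbers with x ≠ m, satisfying the quadratic equation m² + ((φ² − 1)/x − x)·m + 1 = 0 together with m/(x − m) = τ/φ. Then x = sqrt(φ² + (τ + 1/τ)·φ + 1) and m = x/(1 + φ/τ). -/

import Mathlib

/-- if `φ ≥ 1`, `τ > 0`, `x > 0`, `x ≠ m`, and `x, m` satisfy the quadratic
equation `m² + ((φ² − 1)/x − x)·m + 1 = 0` together with `m/(x − m) = τ/φ`, then
`x = sqrt(φ² + (τ + 1/τ)·φ + 1)` and `m = x/(1 + φ/τ)`. -/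
theorem solve_master_system
    (φ τ x m : ℝ) (hφ : 1 ≤ φ) (hτ : 0 < τ) (hx : 0 < x) (hxm : x ≠ m)
    (hquad : m ^ 2 + ((φ ^ 2 - 1) / x - x) * m + 1 = 0)
    (hratio : m / (x - m) = τ / φ) :
    x = Real.sqrt (φ ^ 2 + (τ + 1 / τ) * φ + 1) ∧ m = x / (1 + φ / τ) := by
  have hφ0 : (0:ℝ) < φ := lt_of_lt_of_le one_pos hφ
  have hsub : x - m ≠ 0 := sub_ne_zero.mpr hxm
  have hxne : x ≠ 0 := ne_of_gt hx
  have hm : m * φ = τ * (x - m) := by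
    field_simp at hratio; linarith
  have hq : m ^ 2 * x + ((φ ^ 2 - 1) - x ^ 2) * m + x = 0 := by
    field_simp at hquad; nlinarith [hquad]
  have hsum : 0 < τ + φ := by linarith
  have hmeq : m = τ * x / (τ + φ) := by
    field_simp; linarith [hm]
  have hx2 : x ^ 2 = φ ^ 2 + (τ + 1 / τ) * φ + 1 := by
    have hτne : τ ≠ 0 := ne_of_gt hτ
    rw [hmeq] at hq
    field_simp at hq
    have h3 : x * (τ + φ) * (x ^ 2 * (τ * φ) - ((φ ^ 2 - 1) * τ * (τ + φ) + (τ + φ) ^ 2)) = 0 := by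
      linear_combination (-(τ + φ)) * hq
    have h4 : x ^ 2 * (τ * φ) = (φ ^ 2 - 1) * τ * (τ + φ) + (τ + φ) ^ 2 := by
      rcases mul_eq_zero.mp h3 with h | h
      · exact absurd h (by positivity)
      · linarith [sub_eq_zero.mp h]
    have hgoal : x ^ 2 * (τ * φ) = (φ ^ 2 + (τ + 1 / τ) * φ + 1) * (τ * φ) := by
      rw [h4]; field_simp; ring
    exact mul_right_cancel₀ (by positivity) hgoal
  constructor
  · rw [← hx2, Real.sqrt_sq hx.le]
  · rw [hmeq]
    rw [div_eq_div_iff hsum.ne' (by positivity)]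
    field_simp
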